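/- If $f(q) = 1 + \sum_{n\ge 1} r(n) q^n$ is a formal power series with unit constant term, then $1/f(q) = \sum_{k \ge 0} \left( \sum_{\lambda \vdash k} \frac{(-1)^{\ell(\lambda)} \ell(\lambda)! \prod_i r(i)^{m_i(\lambda)}}{\prod_i m_i(\lambda)!} \right) q^k$. -/

import Mathlib

open Finset PowerSeries

noncomputable def WW (r : ℕ → ℝ) (k : ℕ) (p : Nat.Partition k) : ℝ :=
  ((-1 : ℝ) ^ p.parts.card * (Nat.factorial p.parts.card) *
      ∏ i ∈ Finset.Icc 1 k, (r i) ^ (p.parts.count i)) /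
    ∏ i ∈ Finset.Icc 1 k, (Nat.factorial (p.parts.count i) : ℝ)

noncomputable def aa (r : ℕ → ℝ) (k : ℕ) : ℝ := ∑ p : Nat.Partition k, WW r k p

lemma count_eq_zero_of_gt {m : ℕ} (μ : Nat.Partition m) {i : ℕ} (hi : m < i) :
    μ.parts.count i = 0 := by
  rw [Multiset.count_eq_zero]
  intro hmem
  have : i ≤ μ.parts.sum := Multiset.single_le_sum (fun x _ => Nat.zero_le x) i hmem
  rw [μ.parts_sum] at this
  omega

lemma toFinset_subset_Icc {k : ℕ} (q : Nat.Partition k) :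
    q.parts.toFinset ⊆ Finset.Icc 1 k := by
  intro i hi
  rw [Multiset.mem_toFinset] at hi
  have h1 : 0 < i := q.parts_pos hi
  have h2 : i ≤ q.parts.sum := Multiset.single_le_sum (fun x _ => Nat.zero_le x) i hi
  rw [q.parts_sum] at h2
  rw [Finset.mem_Icc]
  omega

def insertPart {k n : ℕ} (h1 : 1 ≤ n) (h2 : n ≤ k) (μ : Nat.Partition (k - n)) :
    Nat.Partition k where
  parts := n ::ₘ μ.parts
  parts_pos := by
    intro i hi
    rcases Multiset.mem_cons.1 hi with h | h
    · omega
    · exact μ.parts_pos h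
  parts_sum := by rw [Multiset.sum_cons, μ.parts_sum]; omega

def erasePart {k n : ℕ} (q : Nat.Partition k) (h : n ∈ q.parts) :
    Nat.Partition (k - n) where
  parts := q.parts.erase n
  parts_pos := fun hi => q.parts_pos (Multiset.mem_of_mem_erase hi)
  parts_sum := by
    have h2 := congrArg Multiset.sum (Multiset.cons_erase h)
    rw [Multiset.sum_cons, q.parts_sum] at h2
    omega

lemma prod_pow_count_eq {k n : ℕ} (hnk : n ≤ k) (μ : Nat.Partition (k - n)) (r : ℕ → ℝ) :
    ∏ i ∈ Finset.Icc 1 k, r i ^ μ.parts.count i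
      = ∏ i ∈ Finset.Icc 1 (k - n), r i ^ μ.parts.count i := by
  refine (Finset.prod_subset (Finset.Icc_subset_Icc_right (Nat.sub_le k n)) ?_).symm
  intro i hi hi'
  rw [Finset.mem_Icc] at hi hi'
  have : μ.parts.count i = 0 := count_eq_zero_of_gt μ (by omega)
  rw [this, pow_zero]

lemma prod_factorial_count_eq {k n : ℕ} (hnk : n ≤ k) (μ : Nat.Partition (k - n)) :
    ∏ i ∈ Finset.Icc 1 k, (Nat.factorial (μ.parts.count i) : ℝ)
      = ∏ i ∈ Finset.Icc 1 (k - n), (Nat.factorial (μ.parts.count i) : ℝ) := by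
  refine (Finset.prod_subset (Finset.Icc_subset_Icc_right (Nat.sub_le k n)) ?_).symm
  intro i hi hi'
  rw [Finset.mem_Icc] at hi hi'
  have : μ.parts.count i = 0 := count_eq_zero_of_gt μ (by omega)
  rw [this]
  simp

lemma factorial_prod_pos (s : Finset ℕ) (g : ℕ → ℕ) :
    (0 : ℝ) < ∏ i ∈ s, (Nat.factorial (g i) : ℝ) :=
  Finset.prod_pos fun i _ => by exact_mod_cast Nat.factorial_pos (g i)

lemma step (r : ℕ → ℝ) {k n : ℕ} (h1 : 1 ≤ n) (h2 : n ≤ k) (μ : Nat.Partition (k - n)) :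
    -(((insertPart h1 h2 μ).parts.count n : ℝ) / ((insertPart h1 h2 μ).parts.card)) *
      WW r k (insertPart h1 h2 μ) = r n * WW r (k - n) μ := by
  have hnIcc : n ∈ Finset.Icc 1 k := Finset.mem_Icc.2 ⟨h1, h2⟩
  set s := μ.parts with hs
  have hparts : (insertPart h1 h2 μ).parts = n ::ₘ s := rfl
  have hcard : (n ::ₘ s).card = s.card + 1 := Multiset.card_cons _ _
  have hcount : (n ::ₘ s).count n = s.count n + 1 := Multiset.count_cons_self _ _
  -- numerator product
  have hP : ∏ i ∈ Finset.Icc 1 k, r i ^ (n ::ₘ s).count i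
      = r n * ∏ i ∈ Finset.Icc 1 (k - n), r i ^ s.count i := by
    rw [← prod_pow_count_eq h2 μ r]
    rw [← Finset.mul_prod_erase _ _ hnIcc, ← Finset.mul_prod_erase _ (fun i => r i ^ s.count i) hnIcc]
    rw [hcount, pow_succ]
    have : ∏ i ∈ (Finset.Icc 1 k).erase n, r i ^ (n ::ₘ s).count i
        = ∏ i ∈ (Finset.Icc 1 k).erase n, r i ^ s.count i := by
      refine Finset.prod_congr rfl fun i hi => ?_
      rw [Multiset.count_cons_of_ne (Finset.ne_of_mem_erase hi)]
    rw [this]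
    ring
  -- denominator product
  have hQ : ∏ i ∈ Finset.Icc 1 k, (Nat.factorial ((n ::ₘ s).count i) : ℝ)
      = ((s.count n : ℝ) + 1) * ∏ i ∈ Finset.Icc 1 (k - n), (Nat.factorial (s.count i) : ℝ) := by
    rw [← prod_factorial_count_eq h2 μ]
    rw [← Finset.mul_prod_erase _ _ hnIcc,
      ← Finset.mul_prod_erase _ (fun i => (Nat.factorial (s.count i) : ℝ)) hnIcc]
    rw [hcount, Nat.factorial_succ]
    have : ∏ i ∈ (Finset.Icc 1 k).erase n, (Nat.factorial ((n ::ₘ s).count i) : ℝ)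
        = ∏ i ∈ (Finset.Icc 1 k).erase n, (Nat.factorial (s.count i) : ℝ) := by
      refine Finset.prod_congr rfl fun i hi => ?_
      rw [Multiset.count_cons_of_ne (Finset.ne_of_mem_erase hi)]
    rw [this]
    push_cast
    ring
  rw [WW, WW, hparts, hcard, hcount, hP, hQ]
  have hQ0 : (0 : ℝ) < ∏ i ∈ Finset.Icc 1 (k - n), (Nat.factorial (s.count i) : ℝ) :=
    factorial_prod_pos _ _
  have hm : ((s.count n : ℝ) + 1) ≠ 0 := by positivity
  have hc : ((s.card : ℝ) + 1) ≠ 0 := by positivity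
  rw [Nat.factorial_succ]
  push_cast
  field_simp
  ring

lemma sum_step (r : ℕ → ℝ) {k n : ℕ} (h1 : 1 ≤ n) (h2 : n ≤ k) :
    ∑ μ : Nat.Partition (k - n), r n * WW r (k - n) μ
      = ∑ q : Nat.Partition k, -((q.parts.count n : ℝ) / q.parts.card) * WW r k q := by
  classical
  symm
  have h0 : ∀ q ∈ (Finset.univ : Finset (Nat.Partition k)),
      q ∉ Finset.univ.filter (fun q : Nat.Partition k => n ∈ q.parts) →
      -((q.parts.count n : ℝ) / q.parts.card) * WW r k q = 0 := by
    intro q _ hq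
    simp only [Finset.mem_filter, Finset.mem_univ, true_and] at hq
    rw [Multiset.count_eq_zero_of_notMem hq]
    simp
  rw [← Finset.sum_subset (Finset.filter_subset _ _) h0]
  refine Finset.sum_nbij'
    (i := fun q => if h : n ∈ q.parts then erasePart q h else default)
    (j := fun μ => insertPart h1 h2 μ) ?_ ?_ ?_ ?_ ?_
  · intro q _; exact Finset.mem_univ _
  · intro μ _
    simp only [Finset.mem_filter, Finset.mem_univ, true_and]
    exact Multiset.mem_cons_self _ _
  · intro q hq
    simp only [Finset.mem_filter, Finset.mem_univ, true_and] at hq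
    rw [dif_pos hq]
    exact Nat.Partition.ext (Multiset.cons_erase hq)
  · intro μ _
    have hmem : n ∈ (insertPart h1 h2 μ).parts := Multiset.mem_cons_self _ _
    rw [dif_pos hmem]
    exact Nat.Partition.ext (Multiset.erase_cons_head _ _)
  · intro q hq
    simp only [Finset.mem_filter, Finset.mem_univ, true_and] at hq
    rw [dif_pos hq]
    have hins : insertPart h1 h2 (erasePart q hq) = q :=
      Nat.Partition.ext (Multiset.cons_erase hq)
    conv_lhs => rw [← hins]
    exact step r h1 h2 (erasePart q hq)

lemma aa_zero (r : ℕ → ℝ) : aa r 0 = 1 := by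
  rw [aa]
  rw [Finset.univ_unique, Finset.sum_singleton]
  have : (default : Nat.Partition 0).parts = 0 := Nat.Partition.partition_zero_parts _
  rw [WW, this]
  simp

lemma recur (r : ℕ → ℝ) {k : ℕ} (hk : 1 ≤ k) :
    ∑ n ∈ Finset.Icc 1 k, r n * aa r (k - n) = -(aa r k) := by
  have h1 : ∀ n ∈ Finset.Icc 1 k,
      r n * aa r (k - n)
        = ∑ q : Nat.Partition k, -((q.parts.count n : ℝ) / q.parts.card) * WW r k q := by
    intro n hn
    rw [Finset.mem_Icc] at hn
    rw [aa, Finset.mul_sum]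
    exact sum_step r hn.1 hn.2
  rw [Finset.sum_congr rfl h1, Finset.sum_comm]
  rw [aa, ← Finset.sum_neg_distrib]
  refine Finset.sum_congr rfl fun q _ => ?_
  have hcard : q.parts.card ≠ 0 := by
    intro h
    have := q.parts_sum
    rw [Multiset.card_eq_zero.1 h] at this
    simp at this
    omega
  have hsum : ∑ n ∈ Finset.Icc 1 k, q.parts.count n = q.parts.card := by
    rw [← Multiset.toFinset_sum_count_eq q.parts]
    refine (Finset.sum_subset (toFinset_subset_Icc q) ?_).symm
    intro i _ hi
    rw [Multiset.count_eq_zero_of_notMem]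
    rwa [← Multiset.mem_toFinset]
  have heq : ∑ n ∈ Finset.Icc 1 k, -((q.parts.count n : ℝ) / q.parts.card) * WW r k q
      = ((∑ n ∈ Finset.Icc 1 k, (q.parts.count n : ℝ)) / q.parts.card) * (-WW r k q) := by
    rw [Finset.sum_div, Finset.sum_mul]
    exact Finset.sum_congr rfl fun n _ => by ring
  rw [heq]
  have hcast : (∑ n ∈ Finset.Icc 1 k, (q.parts.count n : ℝ)) = (q.parts.card : ℝ) := by
    rw [← Nat.cast_sum, hsum]
  rw [hcast, div_self (by exact_mod_cast hcard)]
  ring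

lemma recur' (r : ℕ → ℝ) (k : ℕ) :
    ∑ i ∈ Finset.range (k + 1), aa r i * r (k + 1 - i) = -(aa r (k + 1)) := by
  rw [← recur r (Nat.le_add_left 1 k)]
  refine Finset.sum_nbij' (i := fun i => k + 1 - i) (j := fun n => k + 1 - n) ?_ ?_ ?_ ?_ ?_
  · intro i hi
    simp only [Finset.mem_range] at hi
    rw [Finset.mem_Icc]
    omega
  · intro n hn
    rw [Finset.mem_Icc] at hn
    simp only [Finset.mem_range]
    omega
  · intro i hi
    simp only [Finset.mem_range] at hi
    omega
  · intro n hn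
    rw [Finset.mem_Icc] at hn
    omega
  · intro i hi
    simp only [Finset.mem_range] at hi
    have : k + 1 - (k + 1 - i) = i := by omega
    rw [this]
    ring

theorem stmt5 (r : ℕ → ℝ)
    (f : PowerSeries ℝ) (hf : f = PowerSeries.mk fun n => if n = 0 then 1 else r n) :
    f⁻¹ = PowerSeries.mk fun k =>
      ∑ p : Nat.Partition k,
        ((-1 : ℝ) ^ p.parts.card * (Nat.factorial p.parts.card) *
          ∏ i ∈ Finset.Icc 1 k, (r i) ^ (p.parts.count i)) /
        ∏ i ∈ Finset.Icc 1 k, (Nat.factorial (p.parts.count i) : ℝ) := by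
  have hmk : (PowerSeries.mk fun k =>
      ∑ p : Nat.Partition k,
        ((-1 : ℝ) ^ p.parts.card * (Nat.factorial p.parts.card) *
          ∏ i ∈ Finset.Icc 1 k, (r i) ^ (p.parts.count i)) /
        ∏ i ∈ Finset.Icc 1 k, (Nat.factorial (p.parts.count i) : ℝ))
      = PowerSeries.mk (aa r) := rfl
  rw [hmk]
  have hc : PowerSeries.constantCoeff f ≠ 0 := by
    rw [hf]
    simp
  rw [PowerSeries.inv_eq_iff_mul_eq_one hc]
  ext k
  rw [PowerSeries.coeff_mul, Finset.Nat.sum_antidiagonal_eq_sum_range_succ_mk]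
  cases k with
  | zero =>
    simp [hf, aa_zero]
  | succ k =>
    rw [Finset.sum_range_succ]
    have hlast : (PowerSeries.coeff (k + 1)) (PowerSeries.mk (aa r)) *
        (PowerSeries.coeff (k + 1 - (k + 1))) f = aa r (k + 1) := by
      simp [hf]
    rw [hlast]
    have hrest : ∀ i ∈ Finset.range (k + 1),
        (PowerSeries.coeff i) (PowerSeries.mk (aa r)) *
          (PowerSeries.coeff (k + 1 - i)) f = aa r i * r (k + 1 - i) := by
      intro i hi
      simp only [Finset.mem_range] at hi
      rw [hf]
      simp only [PowerSeries.coeff_mk]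
      rw [if_neg (by omega)]
    rw [Finset.sum_congr rfl hrest, recur' r k]
    simp
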